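/- Let w_1 ∈ K be deterministic, let (g̃_t)_{1≤t≤T} be square-integrable H-valued random vectors with g̃_t being 𝓕_t-measurable, and let (g_t)_{1≤t≤T} be 𝓕_{t−1}-measurable H-valued random vectors satisfying the unbiasedness condition 𝔼[g̃_t | 𝓕_{t−1}] = g_t for each t. Define the iterates w_{t+1} = Π_K(w_t − η_t g̃_t) with η_t = D/(√2 · √(∑_{τ=1}^t ‖g̃_τ‖²)) whenever the denominator is positive, and w_{t+1} = w_t otherwise. Then for every fixed w* ∈ K, the expected linearized regret satisfies 𝔼[∑_{t=1}^T ⟨g_t, w_t − w*⟩] ≤ √2 · D · 𝔼[√(∑_{t=1}^T ‖g̃_t‖²)]. -/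

import Mathlib

open MeasureTheory Finset
open scoped RealInnerProductSpace


lemma condExpL2_ae_eq_condexp
    {Ω : Type*} {m mΩ : MeasurableSpace Ω} (hm : m ≤ mΩ)
    {μ : Measure Ω} [IsFiniteMeasure μ]
    {H : Type*} [NormedAddCommGroup H] [InnerProductSpace ℝ H] [CompleteSpace H]
    {f : Ω → H} (hf : MemLp f 2 μ) :
    (condExpL2 H ℝ hm (hf.toLp f) : Ω → H) =ᵐ[μ] μ[f|m] := by
  haveI : SigmaFinite (μ.trim hm) := inferInstance
  refine ae_eq_condExp_of_forall_setIntegral_eq hm (hf.integrable one_le_two)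
    (fun s _ _ => (integrable_condExpL2_of_isFiniteMeasure (𝕜 := ℝ) hm).integrableOn)
    (fun s hs hμs => ?_) (aestronglyMeasurable_condExpL2 hm _)
  rw [integral_condExpL2_eq hm (hf.toLp f) hs hμs.ne]
  exact setIntegral_congr_ae (hm s hs) ((hf.coeFn_toLp).mono fun x hx _ => hx)

lemma integral_inner_condexp_eq
    {Ω : Type*} {m mΩ : MeasurableSpace Ω} (hm : m ≤ mΩ)
    {μ : Measure Ω} [IsFiniteMeasure μ]
    {H : Type*} [NormedAddCommGroup H] [InnerProductSpace ℝ H] [CompleteSpace H]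
    {f X : Ω → H} (hf : MemLp f 2 μ) (hX : StronglyMeasurable[m] X)
    {C : ℝ} (hXb : ∀ ω, ‖X ω‖ ≤ C) :
    ∫ ω, ⟪f ω, X ω⟫ ∂μ = ∫ ω, ⟪(μ[f|m]) ω, X ω⟫ ∂μ := by
  haveI : Fact (m ≤ mΩ) := ⟨hm⟩
  have hXm : MemLp X 2 μ :=
    MemLp.of_bound ((hX.mono hm).aestronglyMeasurable) C (Filter.Eventually.of_forall hXb)
  set F : Lp H 2 μ := hf.toLp f with hF
  set XL : Lp H 2 μ := hXm.toLp X with hXL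
  have hXLmem : XL ∈ lpMeas H ℝ m 2 μ :=
    (mem_lpMeas_iff_aestronglyMeasurable).2 ⟨X, hX, hXm.coeFn_toLp⟩
  have horth : (inner ℝ (F - ((condExpL2 H ℝ hm F : lpMeas H ℝ m 2 μ) : Lp H 2 μ)) XL : ℝ) = 0 := by
    exact Submodule.starProjection_inner_eq_zero F XL hXLmem
  have h2 : ∫ ω, ⟪f ω - (condExpL2 H ℝ hm F : Ω → H) ω, X ω⟫ ∂μ = 0 := by
    rw [← horth, L2.inner_def]
    refine integral_congr_ae ?_
    filter_upwards [Lp.coeFn_sub F ((condExpL2 H ℝ hm F : lpMeas H ℝ m 2 μ) : Lp H 2 μ),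
      hf.coeFn_toLp, hXm.coeFn_toLp] with ω h1 h2 h3
    simp only [h1, Pi.sub_apply]
    rw [show (XL : Ω → H) ω = X ω from h3, show (F : Ω → H) ω = f ω from h2]
  have hint1 : Integrable (fun ω => ⟪f ω, X ω⟫) μ := by
    refine Integrable.mono' ((hf.integrable one_le_two).norm.const_mul C) ?_ ?_
    · exact AEStronglyMeasurable.inner (hf.aestronglyMeasurable) ((hX.mono hm).aestronglyMeasurable)
    · filter_upwards with ω
      calc ‖⟪f ω, X ω⟫‖ ≤ ‖f ω‖ * ‖X ω‖ := norm_inner_le_norm _ _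
        _ ≤ C * ‖f ω‖ := by
            rw [mul_comm]
            exact mul_le_mul_of_nonneg_right (hXb ω) (norm_nonneg _)
  have hint2 : Integrable (fun ω => ⟪(condExpL2 H ℝ hm F : Ω → H) ω, X ω⟫) μ := by
    refine Integrable.mono' ((integrable_condExpL2_of_isFiniteMeasure (𝕜 := ℝ) hm (f := F)).norm.const_mul C) ?_ ?_
    · exact AEStronglyMeasurable.inner (Lp.aestronglyMeasurable _) ((hX.mono hm).aestronglyMeasurable)
    · filter_upwards with ω
      calc ‖⟪(condExpL2 H ℝ hm F : Ω → H) ω, X ω⟫‖ ≤ ‖(condExpL2 H ℝ hm F : Ω → H) ω‖ * ‖X ω‖ :=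
            norm_inner_le_norm _ _
        _ ≤ C * ‖(condExpL2 H ℝ hm F : Ω → H) ω‖ := by
            rw [mul_comm]
            exact mul_le_mul_of_nonneg_right (hXb ω) (norm_nonneg _)
  have h3 : ∫ ω, ⟪f ω, X ω⟫ ∂μ = ∫ ω, ⟪(condExpL2 H ℝ hm F : Ω → H) ω, X ω⟫ ∂μ := by
    have h2' : ∫ ω, (⟪f ω, X ω⟫ - ⟪(condExpL2 H ℝ hm F : Ω → H) ω, X ω⟫) ∂μ = 0 := by
      rw [← h2]
      exact integral_congr_ae (Filter.Eventually.of_forall fun ω => (inner_sub_left _ _ _).symm)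
    rw [integral_sub hint1 hint2] at h2'
    linarith
  rw [h3]
  refine integral_congr_ae ?_
  filter_upwards [condExpL2_ae_eq_condexp hm hf] with ω hω
  rw [hω]

section ProjAux
variable {H : Type*} [NormedAddCommGroup H] [InnerProductSpace ℝ H]
  {K : Set H} (hKconvex : Convex ℝ K) (proj : H → H)
  (hproj_mem : ∀ v, proj v ∈ K)
  (hproj_min : ∀ v, ∀ u ∈ K, ‖v - proj v‖ ≤ ‖v - u‖)

include hKconvex hproj_mem hproj_min

lemma proj_obtuse : ∀ v, ∀ u ∈ K, ⟪v - proj v, u - proj v⟫ ≤ 0 := by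
  intro v u hu
  haveI : Nonempty K := ⟨⟨proj v, hproj_mem v⟩⟩
  have hinf : ‖v - proj v‖ = ⨅ w : K, ‖v - (w : H)‖ := by
    refine le_antisymm (le_ciInf fun w => hproj_min v w w.2) ?_
    exact ciInf_le ⟨0, fun x hx => by obtain ⟨w, rfl⟩ := hx; exact norm_nonneg _⟩
      (⟨proj v, hproj_mem v⟩ : K)
  exact ((norm_eq_iInf_iff_real_inner_le_zero hKconvex (hproj_mem v)).1 hinf) u hu

lemma proj_contract : ∀ v, ∀ u ∈ K, ‖proj v - u‖ ≤ ‖v - u‖ := by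
  intro v u hu
  have h := proj_obtuse hKconvex proj hproj_mem hproj_min v u hu
  have hexp : ‖v - u‖ ^ 2 = ‖v - proj v‖ ^ 2 - 2 * ⟪v - proj v, u - proj v⟫ + ‖proj v - u‖ ^ 2 := by
    have : v - u = (v - proj v) - (u - proj v) := by abel
    rw [this, norm_sub_sq_real]
    congr 1
    rw [show proj v - u = -(u - proj v) by abel, norm_neg]
  have h1 : ‖proj v - u‖ ^ 2 ≤ ‖v - u‖ ^ 2 := by nlinarith [sq_nonneg ‖v - proj v‖]
  nlinarith [norm_nonneg (proj v - u), norm_nonneg (v - u)]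

lemma proj_lipschitz : LipschitzWith 1 proj := by
  rw [lipschitzWith_iff_dist_le_mul]
  intro v u
  simp only [NNReal.coe_one, one_mul, dist_eq_norm]
  have h1 := proj_obtuse hKconvex proj hproj_mem hproj_min v (proj u) (hproj_mem u)
  have h2 := proj_obtuse hKconvex proj hproj_mem hproj_min u (proj v) (hproj_mem v)
  have hcs : ⟪v - u, proj v - proj u⟫ ≤ ‖v - u‖ * ‖proj v - proj u‖ :=
    real_inner_le_norm _ _
  have key : ‖proj v - proj u‖ ^ 2 ≤ ⟪v - u, proj v - proj u⟫ := by
    have e1 : ⟪v - proj v, proj u - proj v⟫ ≤ 0 := h1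
    have e2 : ⟪u - proj u, proj v - proj u⟫ ≤ 0 := h2
    have e3 : ⟪v - proj v, proj v - proj u⟫ ≥ 0 := by
      rw [show proj v - proj u = -(proj u - proj v) by abel, inner_neg_right]; linarith
    have expand : ⟪v - u, proj v - proj u⟫
        = ⟪v - proj v, proj v - proj u⟫ - ⟪u - proj u, proj v - proj u⟫
          + ⟪proj v - proj u, proj v - proj u⟫ := by
      rw [← inner_sub_left, ← inner_add_left]
      congr 1
      abel
    rw [real_inner_self_eq_norm_sq] at expand
    linarith
  rcases eq_or_lt_of_le (norm_nonneg (proj v - proj u)) with hz | hz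
  · rw [← hz]; exact norm_nonneg _
  · nlinarith
end ProjAux

section Pathwise
variable {H : Type*} [NormedAddCommGroup H] [InnerProductSpace ℝ H]

lemma pathwise_bound
    {K : Set H} (hKconvex : Convex ℝ K) (proj : H → H)
    (hproj_mem : ∀ v, proj v ∈ K)
    (hproj_min : ∀ v, ∀ u ∈ K, ‖v - proj v‖ ≤ ‖v - u‖)
    (D : ℝ) (hD : ∀ w ∈ K, ∀ v ∈ K, ‖w - v‖ ≤ D)
    (T : ℕ) (G : ℕ → H) (W : ℕ → H) (hW1 : W 1 ∈ K)
    (hiter_pos : ∀ t, 1 ≤ t → 0 < Real.sqrt (∑ τ ∈ Icc 1 t, ‖G τ‖ ^ 2) →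
      W (t + 1) = proj (W t - (D / (Real.sqrt 2 * Real.sqrt (∑ τ ∈ Icc 1 t, ‖G τ‖ ^ 2))) • G t))
    (hiter_zero : ∀ t, 1 ≤ t → Real.sqrt (∑ τ ∈ Icc 1 t, ‖G τ‖ ^ 2) = 0 → W (t + 1) = W t)
    (wstar : H) (hwstar : wstar ∈ K) :
    ∑ t ∈ Icc 1 T, ⟪G t, W t - wstar⟫ ≤
      Real.sqrt 2 * D * Real.sqrt (∑ t ∈ Icc 1 T, ‖G t‖ ^ 2) := by
  set S : ℕ → ℝ := fun t => ∑ τ ∈ Icc 1 t, ‖G τ‖ ^ 2 with hSdef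
  set c : ℕ → ℝ := fun t => Real.sqrt (S t) with hcdef
  have hS0 : ∀ t, 0 ≤ S t := fun t => Finset.sum_nonneg fun τ _ => sq_nonneg _
  have hSmono : Monotone S := fun s t hst =>
    Finset.sum_le_sum_of_subset_of_nonneg (Finset.Icc_subset_Icc_right hst)
      (fun τ _ _ => sq_nonneg _)
  have hc0 : ∀ t, 0 ≤ c t := fun t => Real.sqrt_nonneg _
  have hcmono : Monotone c := fun s t hst => Real.sqrt_le_sqrt (hSmono hst)
  have hc00 : c 0 = 0 := by simp [hcdef, hSdef]
  have hcsq : ∀ t, c t ^ 2 = S t := fun t => Real.sq_sqrt (hS0 t)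
  have hWK : ∀ t, 1 ≤ t → W t ∈ K := by
    intro t ht
    induction t, ht using Nat.le_induction with
    | base => exact hW1
    | succ n hn ih =>
      rcases eq_or_lt_of_le (hc0 n) with hz | hz
      · rw [hiter_zero n hn hz.symm]; exact ih
      · rw [hiter_pos n hn hz]; exact hproj_mem _
  have hD0 : 0 ≤ D := le_trans (norm_nonneg (wstar - wstar)) (hD wstar hwstar wstar hwstar)
  set a : ℕ → ℝ := fun t => ‖W t - wstar‖ ^ 2 with hadef
  have ha0 : ∀ t, 0 ≤ a t := fun t => sq_nonneg _
  have haD : ∀ t, 1 ≤ t → a t ≤ D ^ 2 := fun t ht =>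
    pow_le_pow_left₀ (norm_nonneg _) (hD _ (hWK t ht) _ hwstar) 2
  rcases eq_or_lt_of_le hD0 with hDz | hDpos
  · -- D = 0
    have hL : ∑ t ∈ Icc 1 T, ⟪G t, W t - wstar⟫ = 0 := by
      refine Finset.sum_eq_zero fun t ht => ?_
      have h1 : (1:ℕ) ≤ t := (Finset.mem_Icc.1 ht).1
      have : W t - wstar = 0 := by
        have := hD _ (hWK t h1) _ hwstar
        rw [← hDz] at this
        exact norm_le_zero_iff.1 this
      rw [this, inner_zero_right]
    rw [hL, ← hDz]
    simp [hcdef]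
  -- D > 0
  have hs2 : (0:ℝ) < Real.sqrt 2 := by positivity
  have h22 : Real.sqrt 2 * Real.sqrt 2 = 2 := Real.mul_self_sqrt (by norm_num)
  -- single step bound
  have step : ∀ t, 1 ≤ t → ⟪G t, W t - wstar⟫ ≤
      (a t - a (t + 1)) * c t / (Real.sqrt 2 * D) + D * ‖G t‖ ^ 2 / (2 * Real.sqrt 2 * c t) := by
    intro t ht
    rcases eq_or_lt_of_le (hc0 t) with hz | hz
    · -- c t = 0 : G t = 0
      have hSt : S t = 0 := by
        have := hcsq t; rw [← hz] at this; simpa using this.symm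
      have hGt : G t = 0 := by
        have hmem : t ∈ Icc 1 t := Finset.mem_Icc.2 ⟨ht, le_refl t⟩
        have hle : ‖G t‖ ^ 2 ≤ S t :=
          Finset.single_le_sum (f := fun τ => ‖G τ‖ ^ 2) (fun τ _ => sq_nonneg _) hmem
        rw [hSt] at hle
        have : ‖G t‖ ^ 2 = 0 := le_antisymm hle (sq_nonneg _)
        simpa using this
      rw [hGt]
      simp [← hz]
    · -- c t > 0
      set η : ℝ := D / (Real.sqrt 2 * c t) with hηdef
      have hη : 0 < η := div_pos hDpos (mul_pos hs2 hz)
      have hW := hiter_pos t ht hz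
      have hcontract : ‖W (t+1) - wstar‖ ≤ ‖(W t - η • G t) - wstar‖ := by
        rw [hW]
        exact proj_contract hKconvex proj hproj_mem hproj_min _ _ hwstar
      have hexp : ‖(W t - η • G t) - wstar‖ ^ 2
          = a t - 2 * η * ⟪G t, W t - wstar⟫ + η ^ 2 * ‖G t‖ ^ 2 := by
        have e1 : (W t - η • G t) - wstar = (W t - wstar) - η • G t := by abel
        rw [e1, norm_sub_sq_real, inner_smul_right, norm_smul, mul_pow]
        rw [real_inner_comm]
        simp [abs_of_pos hη, hadef]
        ring
      have hkey : a (t+1) ≤ a t - 2 * η * ⟪G t, W t - wstar⟫ + η ^ 2 * ‖G t‖ ^ 2 := by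
        rw [← hexp, hadef]
        exact pow_le_pow_left₀ (norm_nonneg _) hcontract 2
      have hx : ⟪G t, W t - wstar⟫ ≤ (a t - a (t+1) + η ^ 2 * ‖G t‖ ^ 2) / (2 * η) := by
        rw [le_div_iff₀ (by positivity)]
        nlinarith
      refine hx.trans (le_of_eq ?_)
      rw [hηdef]
      have hct : c t ≠ 0 := ne_of_gt hz
      have hDne : D ≠ 0 := ne_of_gt hDpos
      field_simp
      ring_nf
      linear_combination ((‖W t - wstar‖^2 - ‖W (1+t) - wstar‖^2) * c t^2) * h22
  -- summation lemma A
  have lemA : ∀ n : ℕ, ∑ t ∈ Icc 1 n, (a t - a (t + 1)) * c t ≤ (D ^ 2 - a (n + 1)) * c n := by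
    intro n
    induction n with
    | zero => simp [hc00]
    | succ n ih =>
      rw [Finset.sum_Icc_succ_top (Nat.le_add_left 1 n)]
      have h1 : a (n + 1) ≤ D ^ 2 := haD (n + 1) (Nat.le_add_left 1 n)
      have h2 : c n ≤ c (n + 1) := hcmono (Nat.le_succ n)
      have h3 : (D ^ 2 - a (n + 1)) * c n ≤ (D ^ 2 - a (n + 1)) * c (n + 1) :=
        mul_le_mul_of_nonneg_left h2 (by linarith)
      nlinarith
  -- summation lemma B
  have lemB : ∀ n : ℕ, ∑ t ∈ Icc 1 n, ‖G t‖ ^ 2 / c t ≤ 2 * c n := by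
    intro n
    induction n with
    | zero => simp [hc00]
    | succ n ih =>
      rw [Finset.sum_Icc_succ_top (Nat.le_add_left 1 n)]
      have hSsucc : S (n + 1) = S n + ‖G (n + 1)‖ ^ 2 := by
        simp only [hSdef]
        exact Finset.sum_Icc_succ_top (Nat.le_add_left 1 n) _
      rcases eq_or_lt_of_le (hc0 (n + 1)) with hz | hz
      · have hS1 : S (n + 1) = 0 := by
          have := hcsq (n + 1); rw [← hz] at this; simpa using this.symm
        have hG0 : ‖G (n + 1)‖ ^ 2 = 0 := by
          nlinarith [hS0 n]
        have hcn : c n ≤ c (n + 1) := hcmono (Nat.le_succ n)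
        rw [hG0]
        simp only [zero_div, add_zero]
        linarith
      · have hdiv : ‖G (n + 1)‖ ^ 2 / c (n + 1) ≤ 2 * c (n + 1) - 2 * c n := by
          rw [div_le_iff₀ hz]
          have e1 : c (n + 1) ^ 2 = S (n + 1) := hcsq (n + 1)
          have e2 : c n ^ 2 = S n := hcsq n
          nlinarith [sq_nonneg (c (n + 1) - c n), hc0 n]
        linarith
  -- combine
  have hsum : ∑ t ∈ Icc 1 T, ⟪G t, W t - wstar⟫ ≤
      (∑ t ∈ Icc 1 T, (a t - a (t + 1)) * c t) / (Real.sqrt 2 * D)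
        + (D / (2 * Real.sqrt 2)) * ∑ t ∈ Icc 1 T, ‖G t‖ ^ 2 / c t := by
    rw [Finset.sum_div, Finset.mul_sum, ← Finset.sum_add_distrib]
    refine Finset.sum_le_sum fun t ht => ?_
    have h1 : (1:ℕ) ≤ t := (Finset.mem_Icc.1 ht).1
    refine (step t h1).trans (le_of_eq ?_)
    congr 1
    rw [div_mul_div_comm]
  have hA : (∑ t ∈ Icc 1 T, (a t - a (t + 1)) * c t) ≤ D ^ 2 * c T := by
    refine (lemA T).trans ?_
    have := ha0 (T + 1)
    nlinarith [hc0 T]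
  have hB := lemB T
  have hend : D ^ 2 * c T / (Real.sqrt 2 * D) + (D / (2 * Real.sqrt 2)) * (2 * c T)
      = Real.sqrt 2 * D * c T := by
    have hDne : D ≠ 0 := ne_of_gt hDpos
    have hs2ne : Real.sqrt 2 ≠ 0 := ne_of_gt hs2
    field_simp
    ring_nf
    rw [show Real.sqrt 2 ^ 2 = 2 by rw [pow_two, h22]]
  have hfin : (∑ t ∈ Icc 1 T, (a t - a (t + 1)) * c t) / (Real.sqrt 2 * D)
        + (D / (2 * Real.sqrt 2)) * ∑ t ∈ Icc 1 T, ‖G t‖ ^ 2 / c t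
      ≤ Real.sqrt 2 * D * c T := by
    rw [← hend]
    have hc1 : 0 < Real.sqrt 2 * D := mul_pos hs2 hDpos
    have hc2 : 0 ≤ D / (2 * Real.sqrt 2) := by positivity
    gcongr
  exact hsum.trans hfin
end Pathwise

/-- expected linearized-regret bound for adaptive projected
descent driven by unbiased noisy sub-gradient observations. -/
theorem stmt5
    {Ω : Type*} {mΩ : MeasurableSpace Ω} {μ : Measure Ω} [IsProbabilityMeasure μ]
    (𝓕 : Filtration ℕ mΩ)
    {H : Type*} [NormedAddCommGroup H] [InnerProductSpace ℝ H] [CompleteSpace H]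
    (K : Set H) (hKne : K.Nonempty) (hKclosed : IsClosed K) (hKconvex : Convex ℝ K)
    (D : ℝ) (hD : ∀ w ∈ K, ∀ v ∈ K, ‖w - v‖ ≤ D)
    (proj : H → H)
    (hproj_mem : ∀ v, proj v ∈ K)
    (hproj_min : ∀ v, ∀ u ∈ K, ‖v - proj v‖ ≤ ‖v - u‖)
    (T : ℕ) (g gtld : ℕ → Ω → H)
    (hgtld_sq : ∀ t ∈ Icc 1 T, MemLp (gtld t) 2 μ)
    (hgtld_meas : ∀ t ∈ Icc 1 T, StronglyMeasurable[𝓕 t] (gtld t))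
    (hg_meas : ∀ t ∈ Icc 1 T, StronglyMeasurable[𝓕 (t - 1)] (g t))
    (hunbiased : ∀ t ∈ Icc 1 T, μ[gtld t | 𝓕 (t - 1)] =ᵐ[μ] g t)
    (w : ℕ → Ω → H) (w₁ : H) (hw₁K : w₁ ∈ K) (hw1 : ∀ ω, w 1 ω = w₁)
    (hiter_pos : ∀ t, 1 ≤ t → ∀ ω,
      0 < Real.sqrt (∑ τ ∈ Icc 1 t, ‖gtld τ ω‖ ^ 2) →
      w (t + 1) ω = proj (w t ω -
        (D / (Real.sqrt 2 * Real.sqrt (∑ τ ∈ Icc 1 t, ‖gtld τ ω‖ ^ 2))) • gtld t ω))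
    (hiter_zero : ∀ t, 1 ≤ t → ∀ ω,
      Real.sqrt (∑ τ ∈ Icc 1 t, ‖gtld τ ω‖ ^ 2) = 0 → w (t + 1) ω = w t ω)
    (wstar : H) (hwstar : wstar ∈ K) :
    (∫ ω, (∑ t ∈ Icc 1 T, ⟪g t ω, w t ω - wstar⟫) ∂μ) ≤
      Real.sqrt 2 * D * ∫ ω, Real.sqrt (∑ t ∈ Icc 1 T, ‖gtld t ω‖ ^ 2) ∂μ := by
  classical
  have hD0 : 0 ≤ D := le_trans (norm_nonneg (wstar - wstar)) (hD wstar hwstar wstar hwstar)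
  -- pathwise bound
  have pathω : ∀ ω, ∑ t ∈ Icc 1 T, ⟪gtld t ω, w t ω - wstar⟫ ≤
      Real.sqrt 2 * D * Real.sqrt (∑ t ∈ Icc 1 T, ‖gtld t ω‖ ^ 2) := fun ω =>
    pathwise_bound hKconvex proj hproj_mem hproj_min D hD T (fun t => gtld t ω)
      (fun t => w t ω) (by show w 1 ω ∈ K; rw [hw1 ω]; exact hw₁K)
      (fun t ht h => hiter_pos t ht ω h) (fun t ht h => hiter_zero t ht ω h) wstar hwstar
  -- the iterates stay in K
  have hwK : ∀ ω, ∀ t, 1 ≤ t → w t ω ∈ K := by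
    intro ω t ht
    induction t, ht using Nat.le_induction with
    | base => rw [hw1 ω]; exact hw₁K
    | succ n hn ih =>
      rcases eq_or_lt_of_le (Real.sqrt_nonneg (∑ τ ∈ Icc 1 n, ‖gtld τ ω‖ ^ 2)) with hz | hz
      · rw [hiter_zero n hn ω hz.symm]; exact ih
      · rw [hiter_pos n hn ω hz]; exact hproj_mem _
  -- measurability of the iterates
  have hproj_cont : Continuous proj :=
    (proj_lipschitz hKconvex proj hproj_mem hproj_min).continuous
  have hwmeas : ∀ t, 1 ≤ t → t ≤ T + 1 → StronglyMeasurable[𝓕 (t - 1)] (w t) := by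
    intro t ht
    induction t, ht using Nat.le_induction with
    | base =>
      intro _
      have : w 1 = fun _ => w₁ := funext hw1
      rw [this]; exact stronglyMeasurable_const
    | succ n hn ih =>
      intro hle
      have hnT : n ≤ T := by omega
      have hSmeas : Measurable[𝓕 n] (fun ω => ∑ τ ∈ Icc 1 n, ‖gtld τ ω‖ ^ 2) := by
        refine Finset.measurable_sum _ fun τ hτ => ?_
        have h1 : τ ∈ Icc 1 T :=
          mem_Icc.2 ⟨(mem_Icc.1 hτ).1, le_trans (mem_Icc.1 hτ).2 hnT⟩
        have hsm : StronglyMeasurable[𝓕 n] (gtld τ) :=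
          (hgtld_meas τ h1).mono (𝓕.mono (mem_Icc.1 hτ).2)
        exact (hsm.norm.measurable).pow_const 2
      have hwn : StronglyMeasurable[𝓕 n] (w n) := by
        have := ih (by omega)
        exact this.mono (𝓕.mono (Nat.sub_le n 1))
      have hgn : StronglyMeasurable[𝓕 n] (gtld n) := hgtld_meas n (mem_Icc.2 ⟨hn, hnT⟩)
      have hscal : StronglyMeasurable[𝓕 n]
          (fun ω => D / (Real.sqrt 2 * Real.sqrt (∑ τ ∈ Icc 1 n, ‖gtld τ ω‖ ^ 2))) := by
        refine Measurable.stronglyMeasurable ?_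
        exact measurable_const.div
          (measurable_const.mul (Real.continuous_sqrt.measurable.comp hSmeas))
      have hinner : StronglyMeasurable[𝓕 n] (fun ω => proj (w n ω -
          (D / (Real.sqrt 2 * Real.sqrt (∑ τ ∈ Icc 1 n, ‖gtld τ ω‖ ^ 2))) • gtld n ω)) :=
        hproj_cont.comp_stronglyMeasurable (hwn.sub (hscal.smul hgn))
      have hset : MeasurableSet[𝓕 n]
          {ω | 0 < Real.sqrt (∑ τ ∈ Icc 1 n, ‖gtld τ ω‖ ^ 2)} :=
        measurableSet_lt measurable_const (Real.continuous_sqrt.measurable.comp hSmeas)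
      have heq : w (n + 1) = Set.piecewise
          {ω | 0 < Real.sqrt (∑ τ ∈ Icc 1 n, ‖gtld τ ω‖ ^ 2)}
          (fun ω => proj (w n ω -
            (D / (Real.sqrt 2 * Real.sqrt (∑ τ ∈ Icc 1 n, ‖gtld τ ω‖ ^ 2))) • gtld n ω))
          (w n) := by
        funext ω
        by_cases h : 0 < Real.sqrt (∑ τ ∈ Icc 1 n, ‖gtld τ ω‖ ^ 2)
        · rw [Set.piecewise_eq_of_mem
            ({ω | 0 < Real.sqrt (∑ τ ∈ Icc 1 n, ‖gtld τ ω‖ ^ 2)}) _ _ h]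
          exact hiter_pos n hn ω h
        · rw [Set.piecewise_eq_of_notMem
            ({ω | 0 < Real.sqrt (∑ τ ∈ Icc 1 n, ‖gtld τ ω‖ ^ 2)}) _ _ h]
          refine hiter_zero n hn ω ?_
          exact le_antisymm (not_lt.1 h) (Real.sqrt_nonneg _)
      have : StronglyMeasurable[𝓕 n] (w (n + 1)) := by
        rw [heq]; exact StronglyMeasurable.piecewise hset hinner hwn
      simpa using this
  -- per-step expectation identity
  have hstep_int : ∀ t ∈ Icc 1 T,
      (∫ ω, ⟪g t ω, w t ω - wstar⟫ ∂μ) = ∫ ω, ⟪gtld t ω, w t ω - wstar⟫ ∂μ := by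
    intro t ht
    have ht1 : (1:ℕ) ≤ t := (mem_Icc.1 ht).1
    have htT : t ≤ T := (mem_Icc.1 ht).2
    have hX : StronglyMeasurable[𝓕 (t - 1)] (fun ω => w t ω - wstar) :=
      (hwmeas t ht1 (by omega)).sub stronglyMeasurable_const
    have hXb : ∀ ω, ‖w t ω - wstar‖ ≤ D := fun ω => hD _ (hwK ω t ht1) _ hwstar
    have h1 := integral_inner_condexp_eq (𝓕.le (t - 1)) (hgtld_sq t ht) hX hXb
    have h2 : (∫ ω, ⟪(μ[gtld t | 𝓕 (t - 1)]) ω, w t ω - wstar⟫ ∂μ)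
        = ∫ ω, ⟪g t ω, w t ω - wstar⟫ ∂μ := by
      refine integral_congr_ae ?_
      filter_upwards [hunbiased t ht] with ω hω
      rw [hω]
    rw [← h2]
    exact h1.symm
  -- integrability facts
  have hint_tld : ∀ t ∈ Icc 1 T, Integrable (fun ω => ⟪gtld t ω, w t ω - wstar⟫) μ := by
    intro t ht
    have ht1 : (1:ℕ) ≤ t := (mem_Icc.1 ht).1
    have htT : t ≤ T := (mem_Icc.1 ht).2
    have hXb : ∀ ω, ‖w t ω - wstar‖ ≤ D := fun ω => hD _ (hwK ω t ht1) _ hwstar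
    have hX : AEStronglyMeasurable (fun ω => w t ω - wstar) μ :=
      (((hwmeas t ht1 (by omega)).sub stronglyMeasurable_const).mono
        (𝓕.le (t - 1))).aestronglyMeasurable
    refine Integrable.mono' (((hgtld_sq t ht).integrable one_le_two).norm.mul_const D) ?_ ?_
    · exact AEStronglyMeasurable.inner (hgtld_sq t ht).aestronglyMeasurable hX
    · filter_upwards with ω
      calc ‖⟪gtld t ω, w t ω - wstar⟫‖ ≤ ‖gtld t ω‖ * ‖w t ω - wstar‖ := norm_inner_le_norm _ _
        _ ≤ ‖gtld t ω‖ * D := mul_le_mul_of_nonneg_left (hXb ω) (norm_nonneg _)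
  have hint_g : ∀ t ∈ Icc 1 T, Integrable (fun ω => ⟪g t ω, w t ω - wstar⟫) μ := by
    intro t ht
    have ht1 : (1:ℕ) ≤ t := (mem_Icc.1 ht).1
    have htT : t ≤ T := (mem_Icc.1 ht).2
    have hXb : ∀ ω, ‖w t ω - wstar‖ ≤ D := fun ω => hD _ (hwK ω t ht1) _ hwstar
    have hX : AEStronglyMeasurable (fun ω => w t ω - wstar) μ :=
      (((hwmeas t ht1 (by omega)).sub stronglyMeasurable_const).mono
        (𝓕.le (t - 1))).aestronglyMeasurable
    have hgint : Integrable (g t) μ := by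
      have : Integrable (μ[gtld t | 𝓕 (t - 1)]) μ := integrable_condExp
      exact this.congr (hunbiased t ht)
    refine Integrable.mono' (hgint.norm.mul_const D) ?_ ?_
    · exact AEStronglyMeasurable.inner
        (((hg_meas t ht).mono (𝓕.le (t - 1))).aestronglyMeasurable) hX
    · filter_upwards with ω
      calc ‖⟪g t ω, w t ω - wstar⟫‖ ≤ ‖g t ω‖ * ‖w t ω - wstar‖ := norm_inner_le_norm _ _
        _ ≤ ‖g t ω‖ * D := mul_le_mul_of_nonneg_left (hXb ω) (norm_nonneg _)
  have hint_sqrt : Integrable (fun ω => Real.sqrt (∑ t ∈ Icc 1 T, ‖gtld t ω‖ ^ 2)) μ := by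
    have hasm : AEStronglyMeasurable (fun ω => Real.sqrt (∑ t ∈ Icc 1 T, ‖gtld t ω‖ ^ 2)) μ := by
      refine Real.continuous_sqrt.comp_aestronglyMeasurable ?_
      refine Finset.aestronglyMeasurable_fun_sum _ fun τ hτ => ?_
      exact (continuous_pow 2).comp_aestronglyMeasurable
        (hgtld_sq τ hτ).aestronglyMeasurable.norm
    refine Integrable.mono'
      (integrable_finset_sum (Icc 1 T)
        (fun τ hτ => ((hgtld_sq τ hτ).integrable one_le_two).norm)) hasm ?_
    filter_upwards with ω
    rw [Real.norm_eq_abs, abs_of_nonneg (Real.sqrt_nonneg _)]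
    have h1 : (∑ t ∈ Icc 1 T, ‖gtld t ω‖ ^ 2) ≤ (∑ t ∈ Icc 1 T, ‖gtld t ω‖) ^ 2 :=
      Finset.sum_sq_le_sq_sum_of_nonneg fun τ _ => norm_nonneg _
    calc Real.sqrt (∑ t ∈ Icc 1 T, ‖gtld t ω‖ ^ 2)
        ≤ Real.sqrt ((∑ t ∈ Icc 1 T, ‖gtld t ω‖) ^ 2) := Real.sqrt_le_sqrt h1
      _ = ∑ t ∈ Icc 1 T, ‖gtld t ω‖ :=
          Real.sqrt_sq (Finset.sum_nonneg fun τ _ => norm_nonneg _)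
  -- chain of (in)equalities
  calc (∫ ω, (∑ t ∈ Icc 1 T, ⟪g t ω, w t ω - wstar⟫) ∂μ)
      = ∑ t ∈ Icc 1 T, ∫ ω, ⟪g t ω, w t ω - wstar⟫ ∂μ := integral_finset_sum _ hint_g
    _ = ∑ t ∈ Icc 1 T, ∫ ω, ⟪gtld t ω, w t ω - wstar⟫ ∂μ :=
        Finset.sum_congr rfl hstep_int
    _ = ∫ ω, (∑ t ∈ Icc 1 T, ⟪gtld t ω, w t ω - wstar⟫) ∂μ :=
        (integral_finset_sum _ hint_tld).symm
    _ ≤ ∫ ω, Real.sqrt 2 * D * Real.sqrt (∑ t ∈ Icc 1 T, ‖gtld t ω‖ ^ 2) ∂μ := by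
        refine integral_mono (integrable_finset_sum _ hint_tld)
          ((hint_sqrt.const_mul (Real.sqrt 2 * D)).congr ?_) pathω
        filter_upwards with ω
        ring
    _ = Real.sqrt 2 * D * ∫ ω, Real.sqrt (∑ t ∈ Icc 1 T, ‖gtld t ω‖ ^ 2) ∂μ := by
        rw [← integral_const_mul]
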